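/- arXiv:2505.12561 — 3 statements merged into one kernel-verified Lean document; each statement's English description precedes it below -/
import Mathlib

section
/- The map sending the right coset R(r, w)·S¹ (with r ≥ 0, r² + |w|² = 1) to the point (1 - 2r², 2rw) ∈ ℝ × ℂ is a well-defined homeomorphism from SU(2)/S¹ onto the unit 2-sphere S² = {(t,v) ∈ ℝ × ℂ : t² + |v|² = 1}, where S¹ is embedded as the subgroup of diagonal matrices d(z) = R(z,0). -/
open Complex Matrix

/-- `R(a,b)`: the 2×2 complex matrix with first row `(a, b)` and second row `(-b̄, ā)`. -/
def Rm (a b : ℂ) : Matrix (Fin 2) (Fin 2) ℂ :=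
  !![a, b; -(starRingEnd ℂ) b, (starRingEnd ℂ) a]

lemma Rm_one : Rm 1 0 = 1 := by
  ext i j; fin_cases i <;> fin_cases j <;> simp [Rm, Matrix.one_apply]

lemma Rm_mul_Rm (z w : ℂ) : Rm z 0 * Rm w 0 = Rm (z * w) 0 := by
  ext i j
  fin_cases i <;> fin_cases j <;>
    simp [Rm, Matrix.mul_apply, Fin.sum_univ_two, _root_.map_mul]

/-- The group `SU(2)`, as a subtype of 2×2 complex matrices (with the subspace topology). -/
abbrev SU2 : Type := {M : Matrix (Fin 2) (Fin 2) ℂ // M ∈ Matrix.specialUnitaryGroup (Fin 2) ℂ}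

/-- The equivalence relation on `SU(2)` whose classes are the right cosets of the circle
subgroup `{d(z) = R(z,0) : z ∈ S¹}` of diagonal matrices. -/
def cosetSetoid : Setoid SU2 where
  r A B := ∃ z : ℂ, ‖z‖ = 1 ∧
    (B : Matrix (Fin 2) (Fin 2) ℂ) = (A : Matrix (Fin 2) (Fin 2) ℂ) * Rm z 0
  iseqv := by
    constructor
    · exact fun A => ⟨1, by simp, by rw [Rm_one, mul_one]⟩
    · rintro A B ⟨z, hz, hB⟩
      have h1 : z * starRingEnd ℂ z = 1 := by
        rw [Complex.mul_conj]
        norm_cast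
        rw [Complex.normSq_eq_norm_sq, hz]; norm_num
      exact ⟨starRingEnd ℂ z, by simpa using hz,
        by rw [hB, mul_assoc, Rm_mul_Rm, h1, Rm_one, mul_one]⟩
    · rintro A B C ⟨z, hz, hB⟩ ⟨w, hw, hC⟩
      exact ⟨z * w, by rw [norm_mul, hz, hw]; norm_num,
        by rw [hC, hB, mul_assoc, Rm_mul_Rm]⟩

/-- The unit 2-sphere `S² = {(t,v) ∈ ℝ × ℂ : t² + |v|² = 1}`. -/
abbrev S2 : Type := {p : ℝ × ℂ // p.1 ^ 2 + Complex.normSq p.2 = 1}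

/- ### Auxiliary material -/

lemma Rm_mem {a b : ℂ} (h : normSq a + normSq b = 1) :
    Rm a b ∈ Matrix.specialUnitaryGroup (Fin 2) ℂ := by
  have ha := Complex.normSq_eq_conj_mul_self (z := a)
  have hb := Complex.normSq_eq_conj_mul_self (z := b)
  have hc : (normSq a : ℂ) + (normSq b : ℂ) = 1 := by norm_cast
  rw [Matrix.mem_specialUnitaryGroup_iff]
  constructor
  · rw [Matrix.mem_unitaryGroup_iff]
    ext i j
    fin_cases i <;> fin_cases j <;>
      simp [Rm, Matrix.mul_apply, Fin.sum_univ_two, Matrix.one_apply, star_apply,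
        Matrix.conjTranspose_apply] <;>
      first
        | ring1
        | (linear_combination hc - ha - hb)
  · simp only [Rm, Matrix.det_fin_two_of]
    linear_combination hc - ha - hb

/-- Structure of an element of SU(2). -/
lemma SU2_structure (M : Matrix (Fin 2) (Fin 2) ℂ)
    (h : M ∈ Matrix.specialUnitaryGroup (Fin 2) ℂ) :
    M = Rm (M 0 0) (M 0 1) ∧ normSq (M 0 0) + normSq (M 0 1) = 1 := by
  rw [Matrix.mem_specialUnitaryGroup_iff, Matrix.mem_unitaryGroup_iff] at h
  obtain ⟨hu, hdet⟩ := h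
  have hstar : star M = M⁻¹ := (Matrix.inv_eq_right_inv hu).symm
  have hinv : M⁻¹ = M.adjugate := by
    rw [Matrix.inv_def, hdet]; simp
  have hsm : star M = M.adjugate := hstar.trans hinv
  have hM : M = !![M 0 0, M 0 1; M 1 0, M 1 1] := by
    ext i j; fin_cases i <;> fin_cases j <;> rfl
  have hadj : M.adjugate = !![M 1 1, -(M 0 1); -(M 1 0), M 0 0] := by
    rw [hM]; rw [Matrix.adjugate_fin_two]
  have h11 : M 1 1 = starRingEnd ℂ (M 0 0) := by
    have h0 := congrFun (congrFun hsm 0) 0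
    simp [Matrix.star_apply, Matrix.conjTranspose_apply, hadj] at h0
    exact h0.symm
  have h10 : M 1 0 = -(starRingEnd ℂ) (M 0 1) := by
    have h0 := congrFun (congrFun hsm 1) 0
    simp [Matrix.star_apply, Matrix.conjTranspose_apply, hadj] at h0
    linear_combination h0
  constructor
  · ext i j; fin_cases i <;> fin_cases j <;> simp [Rm, h11, h10]
  · have := congrFun (congrFun hu 0) 0
    simp [Matrix.mul_apply, Fin.sum_univ_two, Matrix.star_apply,
      Matrix.conjTranspose_apply, Matrix.one_apply] at this
    rw [Complex.mul_conj, Complex.mul_conj] at this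
    exact_mod_cast this

lemma Rm_mul_d (a b z : ℂ) : Rm a b * Rm z 0 = Rm (a * z) (b * starRingEnd ℂ z) := by
  ext i j
  fin_cases i <;> fin_cases j <;>
    simp [Rm, Matrix.mul_apply, Fin.sum_univ_two, _root_.map_mul]

lemma normSq_le_one_of_mem {M : Matrix (Fin 2) (Fin 2) ℂ}
    (h : M ∈ Matrix.specialUnitaryGroup (Fin 2) ℂ) (i j : Fin 2) : normSq (M i j) ≤ 1 := by
  rw [Matrix.mem_specialUnitaryGroup_iff, Matrix.mem_unitaryGroup_iff] at h
  have h0 := congrFun (congrFun h.1 i) i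
  simp only [Matrix.mul_apply, Fin.sum_univ_two, Matrix.star_apply,
    Matrix.conjTranspose_apply, Matrix.one_apply_eq, RCLike.star_def] at h0
  rw [Complex.mul_conj, Complex.mul_conj] at h0
  have h1 : normSq (M i 0) + normSq (M i 1) = 1 := by exact_mod_cast h0
  fin_cases j <;> simp only [Fin.zero_eta, Fin.mk_one] <;>
    nlinarith [Complex.normSq_nonneg (M i 0), Complex.normSq_nonneg (M i 1)]

instance SU2.compactSpace : CompactSpace SU2 := by
  suffices h : IsCompact {M : Matrix (Fin 2) (Fin 2) ℂ | M ∈ Matrix.specialUnitaryGroup (Fin 2) ℂ} from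
    isCompact_iff_compactSpace.mp h
  have hK : IsCompact (Set.univ.pi fun _ : Fin 2 =>
      Set.univ.pi fun _ : Fin 2 => Metric.closedBall (0 : ℂ) 1) :=
    isCompact_univ_pi fun _ => isCompact_univ_pi fun _ => isCompact_closedBall 0 1
  refine hK.of_isClosed_subset ?_ ?_
  · have : {M : Matrix (Fin 2) (Fin 2) ℂ | M ∈ Matrix.specialUnitaryGroup (Fin 2) ℂ} =
        (fun M : Matrix (Fin 2) (Fin 2) ℂ => (M * star M, M.det)) ⁻¹' {((1 : Matrix (Fin 2) (Fin 2) ℂ), (1 : ℂ))} := by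
      ext M
      simp [Matrix.mem_specialUnitaryGroup_iff, Matrix.mem_unitaryGroup_iff, Prod.ext_iff]
    rw [this]
    exact IsClosed.preimage
      ((continuous_id.matrix_mul continuous_id.matrix_conjTranspose).prodMk
        continuous_id.matrix_det) isClosed_singleton
  · intro M hM
    rw [Set.mem_pi]
    intro i _
    rw [Set.mem_pi]
    intro j _
    rw [Metric.mem_closedBall, dist_zero_right]
    have h1 := normSq_le_one_of_mem hM i j
    have h2 : ‖M i j‖ ^ 2 = normSq (M i j) := Complex.sq_norm _
    nlinarith [norm_nonneg (M i j)]

/-- The map SU(2) → S². -/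
def fS (A : SU2) : S2 :=
  ⟨(1 - 2 * normSq (A.1 0 0), 2 * A.1 0 0 * A.1 0 1), by
    obtain ⟨-, hn⟩ := SU2_structure A.1 A.2
    simp only
    rw [Complex.normSq_mul, Complex.normSq_mul]
    have h2 : normSq 2 = 4 := by norm_num [Complex.normSq_apply]
    rw [h2]
    nlinarith [Complex.normSq_nonneg (A.1 0 0)]⟩

lemma fS_val (a b : ℂ) (h : Rm a b ∈ Matrix.specialUnitaryGroup (Fin 2) ℂ) :
    (fS ⟨Rm a b, h⟩ : ℝ × ℂ) = (1 - 2 * normSq a, 2 * a * b) := by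
  simp [fS, Rm]

lemma fS_continuous : Continuous fS := by
  have hval : Continuous fun A : SU2 => (A.1 : Matrix (Fin 2) (Fin 2) ℂ) :=
    continuous_subtype_val
  have hrow0 : Continuous fun A : SU2 => A.1 0 := (continuous_apply (0 : Fin 2)).comp hval
  have h00 : Continuous fun A : SU2 => A.1 0 0 := (continuous_apply (0 : Fin 2)).comp hrow0
  have h01 : Continuous fun A : SU2 => A.1 0 1 := (continuous_apply (1 : Fin 2)).comp hrow0
  apply Continuous.subtype_mk
  exact (continuous_const.sub
      (continuous_const.mul (Complex.continuous_normSq.comp h00))).prodMk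
    ((continuous_const.mul h00).mul h01)

lemma normSq_one_of_norm_one {z : ℂ} (hz : ‖z‖ = 1) : normSq z = 1 := by
  have : normSq z = ‖z‖ ^ 2 := (Complex.sq_norm z).symm
  rw [this, hz]; norm_num

lemma fS_respects : ∀ A B : SU2, cosetSetoid.r A B → fS A = fS B := by
  rintro A B ⟨z, hz, hB⟩
  have hz2 : normSq z = 1 := normSq_one_of_norm_one hz
  obtain ⟨hA, -⟩ := SU2_structure A.1 A.2
  have hB' : (B : Matrix (Fin 2) (Fin 2) ℂ) =
      Rm (A.1 0 0 * z) (A.1 0 1 * starRingEnd ℂ z) := by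
    rw [hB]
    conv_lhs => rw [hA]
    rw [Rm_mul_d]
  have hB00 : B.1 0 0 = A.1 0 0 * z := by rw [hB']; rfl
  have hB01 : B.1 0 1 = A.1 0 1 * starRingEnd ℂ z := by rw [hB']; rfl
  apply Subtype.ext
  apply Prod.ext
  · show 1 - 2 * normSq (A.1 0 0) = 1 - 2 * normSq (B.1 0 0)
    rw [hB00, Complex.normSq_mul, hz2, mul_one]
  · show 2 * A.1 0 0 * A.1 0 1 = 2 * B.1 0 0 * B.1 0 1
    rw [hB00, hB01]
    have h1 : z * starRingEnd ℂ z = 1 := by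
      rw [Complex.mul_conj, hz2]; norm_num
    linear_combination (-2) * A.1 0 0 * A.1 0 1 * h1

lemma norm_one_of_normSq_one {z : ℂ} (h : normSq z = 1) : ‖z‖ = 1 := by
  rw [Complex.norm_def, h, Real.sqrt_one]

lemma fS_rel_of_eq {A B : SU2} (hfeq : fS A = fS B) : cosetSetoid.r A B := by
  obtain ⟨hA, hAn⟩ := SU2_structure A.1 A.2
  obtain ⟨hB, hBn⟩ := SU2_structure B.1 B.2
  set a := A.1 0 0 with ha_def
  set b := A.1 0 1 with hb_def
  set a' := B.1 0 0 with ha'_def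
  set b' := B.1 0 1 with hb'_def
  have hp : ((1 - 2 * normSq a, 2 * a * b) : ℝ × ℂ) = (1 - 2 * normSq a', 2 * a' * b') :=
    congrArg Subtype.val hfeq
  have h1 : 1 - 2 * normSq a = 1 - 2 * normSq a' := congrArg Prod.fst hp
  have h2 : 2 * a * b = 2 * a' * b' := congrArg Prod.snd hp
  have hns : normSq a = normSq a' := by linarith
  have hab : a * b = a' * b' := by
    have h2' : (2 : ℂ) * (a * b) = 2 * (a' * b') := by linear_combination h2
    exact mul_left_cancel₀ two_ne_zero h2'
  by_cases ha : a = 0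
  · have ha' : a' = 0 := by
      rw [← Complex.normSq_eq_zero, ← hns, Complex.normSq_eq_zero]; exact ha
    have hb1 : normSq b = 1 := by rw [ha, Complex.normSq_zero] at hAn; linarith
    have hb'1 : normSq b' = 1 := by rw [ha', Complex.normSq_zero] at hBn; linarith
    refine ⟨b * starRingEnd ℂ b', ?_, ?_⟩
    · rw [norm_mul, RCLike.norm_conj, norm_one_of_normSq_one hb1,
        norm_one_of_normSq_one hb'1, mul_one]
    · rw [hB, hA, ha, ha', Rm_mul_d]
      have hzz : b * starRingEnd ℂ (b * starRingEnd ℂ b') = b' := by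
        rw [_root_.map_mul, Complex.conj_conj]
        have hcb : b * starRingEnd ℂ b = (normSq b : ℂ) := Complex.mul_conj b
        calc b * (starRingEnd ℂ b * b') = (b * starRingEnd ℂ b) * b' := by ring
          _ = b' := by rw [hcb, hb1]; norm_num
      rw [hzz, zero_mul]
  · have hnorm : ‖a‖ = ‖a'‖ := by
      rw [Complex.norm_def, Complex.norm_def, hns]
    have ha' : a' ≠ 0 := fun hc => ha (Complex.normSq_eq_zero.mp
      (hns.trans (by rw [hc, Complex.normSq_zero])))
    refine ⟨a' / a, ?_, ?_⟩
    · rw [norm_div, ← hnorm, div_self]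
      exact norm_ne_zero_iff.mpr ha
    · rw [hB, hA, Rm_mul_d]
      have hz1 : a * (a' / a) = a' := by field_simp
      have hz2 : b * starRingEnd ℂ (a' / a) = b' := by
        rw [map_div₀, ← mul_div_assoc]
        have hcane : starRingEnd ℂ a ≠ 0 := by simpa using ha
        rw [div_eq_iff hcane]
        have hca : a * starRingEnd ℂ a = (normSq a : ℂ) := Complex.mul_conj a
        have hca' : a' * starRingEnd ℂ a' = (normSq a' : ℂ) := Complex.mul_conj a'
        have hne : (normSq a : ℂ) ≠ 0 := by
          simpa [Complex.ofReal_eq_zero, Complex.normSq_eq_zero] using ha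
        have hnsC : ((normSq a : ℝ) : ℂ) = ((normSq a' : ℝ) : ℂ) := by exact_mod_cast hns
        have key : (b * starRingEnd ℂ a') * (normSq a : ℂ) =
            (b' * starRingEnd ℂ a) * (normSq a : ℂ) := by
          linear_combination (-(b * starRingEnd ℂ a')) * hca +
            (b' * starRingEnd ℂ a) * hca' +
            (starRingEnd ℂ a * starRingEnd ℂ a') * hab +
            (-(b' * starRingEnd ℂ a)) * hnsC
        exact mul_right_cancel₀ hne key
      rw [hz1, hz2]

lemma fS_surjective : Function.Surjective fS := by
  rintro ⟨⟨t, v⟩, hp⟩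
  simp only at hp
  have ht1 : t ^ 2 ≤ 1 := by nlinarith [Complex.normSq_nonneg v]
  have htle : t ≤ 1 := by nlinarith
  have htge : -1 ≤ t := by nlinarith
  by_cases ht : t = 1
  · have hv : v = 0 := by
      rw [ht] at hp
      have : normSq v = 0 := by linarith
      exact Complex.normSq_eq_zero.mp this
    refine ⟨⟨Rm 0 1, Rm_mem (by simp)⟩, ?_⟩
    apply Subtype.ext
    rw [fS_val]
    simp [ht, hv]
  · set r : ℝ := Real.sqrt ((1 - t) / 2) with hr_def
    have hhalf : 0 ≤ (1 - t) / 2 := by linarith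
    have hr2 : r ^ 2 = (1 - t) / 2 := Real.sq_sqrt hhalf
    have hrpos : 0 < r := Real.sqrt_pos.mpr (by cases lt_or_eq_of_le htle with
      | inl h => linarith
      | inr h => exact absurd h ht)
    set w : ℂ := v / (2 * r) with hw_def
    have hmem : Rm (r : ℂ) w ∈ Matrix.specialUnitaryGroup (Fin 2) ℂ := by
      apply Rm_mem
      have h1 : normSq (r : ℂ) = r ^ 2 := by
        rw [Complex.normSq_ofReal]; ring
      have h2 : normSq w = normSq v / (4 * r ^ 2) := by
        rw [hw_def, Complex.normSq_div, Complex.normSq_mul]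
        norm_num [Complex.normSq_ofReal]
        ring
      rw [h1, h2]
      have hv2 : normSq v = 1 - t ^ 2 := by linarith
      rw [hv2, hr2]
      have hne : (1 : ℝ) - t ≠ 0 := sub_ne_zero.mpr (Ne.symm ht)
      rw [show (4 : ℝ) * ((1 - t) / 2) = (1 - t) * 2 by ring,
        show (1 : ℝ) - t ^ 2 = (1 - t) * (1 + t) by ring,
        mul_div_mul_left _ _ hne]
      ring
    refine ⟨⟨Rm (r : ℂ) w, hmem⟩, ?_⟩
    apply Subtype.ext
    rw [fS_val]
    have hfst : 1 - 2 * normSq (r : ℂ) = t := by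
      rw [Complex.normSq_ofReal]
      nlinarith [hr2]
    have hsnd : 2 * (r : ℂ) * w = v := by
      rw [hw_def]
      have : ((2 : ℂ) * r) ≠ 0 := by
        simp only [ne_eq, mul_eq_zero, OfNat.ofNat_ne_zero, false_or, Complex.ofReal_eq_zero]
        exact ne_of_gt hrpos
      field_simp
      exact mul_div_cancel_left₀ v (by exact_mod_cast ne_of_gt hrpos)
    rw [hfst, hsnd]

/-- The induced map on the quotient. -/
noncomputable def quotEquiv : Quotient cosetSetoid ≃ S2 :=
  Equiv.ofBijective (Quotient.lift fS fS_respects)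
    ⟨fun x y => Quotient.inductionOn₂ x y fun _ _ h => Quotient.sound (fS_rel_of_eq h),
     fun p => by
      obtain ⟨A, hA⟩ := fS_surjective p
      exact ⟨Quotient.mk _ A, hA⟩⟩

/-- The map sending the coset `R(r,w)·S¹` (with `r ≥ 0`, `r² + |w|² = 1`) to
`(1 - 2r², 2rw)` is a well-defined homeomorphism `SU(2)/S¹ ≅ S²`. -/
theorem stmt2 :
    ∃ h : Quotient cosetSetoid ≃ₜ S2,
      ∀ (r : ℝ) (w : ℂ) (hr : 0 ≤ r)
        (hmem : Rm (r : ℂ) w ∈ Matrix.specialUnitaryGroup (Fin 2) ℂ),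
        ((h (Quotient.mk cosetSetoid ⟨Rm (r : ℂ) w, hmem⟩) : S2) : ℝ × ℂ) =
          (1 - 2 * r ^ 2, 2 * (r : ℂ) * w) := by
  have hcont : Continuous (quotEquiv : Quotient cosetSetoid → S2) :=
    fS_continuous.quotient_lift _
  refine ⟨hcont.homeoOfEquivCompactToT2 (f := quotEquiv), ?_⟩
  intro r w _hr hmem
  show (fS ⟨Rm (r : ℂ) w, hmem⟩ : ℝ × ℂ) = _
  rw [fS_val, Complex.normSq_ofReal, ← sq]
end

section
/- Let R(rz,u) be embedded in an N×N identity matrix at rows/columns (p,q), and let d(x) = diag-embedding of R(x,0) at the same positions (p,q). Then the embedded R(rz,u) times the embedded R(x,0) equals the embedded R(x,0) times the embedded R(rz, x̄²u). -/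
open Complex Matrix

/-- The `N×N` matrix equal to the identity except that the `SU(2)`-matrix `R(a,b)`
(rows `(a,b)`, `(-b̄,ā)`) is embedded in rows/columns `p, q`. -/
def embedR (N : ℕ) (a b : ℂ) (p q : Fin N) : Matrix (Fin N) (Fin N) ℂ :=
  fun i j =>
    if i = p ∧ j = p then a
    else if i = p ∧ j = q then b
    else if i = q ∧ j = p then -(starRingEnd ℂ) b
    else if i = q ∧ j = q then (starRingEnd ℂ) a
    else if i = j then 1 else 0

private lemma sum_pair_support {N : ℕ} (p q : Fin N) (hne : p ≠ q) (f : Fin N → ℂ)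
    (h : ∀ k, k ≠ p → k ≠ q → f k = 0) : ∑ k, f k = f p + f q := by
  rw [← Finset.sum_pair hne]
  refine (Finset.sum_subset (Finset.subset_univ _) ?_).symm
  intro k _ hk
  simp only [Finset.mem_insert, Finset.mem_singleton, not_or] at hk
  exact h k hk.1 hk.2

/-- Lemma 1(ii): with `R(rz,u)` and `d(x) = R(x,0)` embedded at the same positions `(p,q)`,
`R(rz,u)·R(x,0) = R(x,0)·R(rz, x̄²u)`. -/
theorem stmt5 (N : ℕ) (r : ℝ) (z u x : ℂ) (hr : 0 ≤ r) (hz : ‖z‖ = 1) (hx : ‖x‖ = 1)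
    (p q : Fin N) (hpq : p < q) :
    embedR N ((r : ℂ) * z) u p q * embedR N x 0 p q =
      embedR N x 0 p q * embedR N ((r : ℂ) * z) ((starRingEnd ℂ x) ^ 2 * u) p q := by
  have hne : p ≠ q := hpq.ne
  have hxx : x * (starRingEnd ℂ) x = 1 := by
    rw [Complex.mul_conj]
    norm_cast
    rw [Complex.normSq_eq_norm_sq, hx]
    norm_num
  ext i j
  rw [mul_apply, mul_apply]
  by_cases hip : i = p
  · rw [sum_pair_support p q hne _ (fun k hkp hkq => by
        simp [embedR, hip, hne, hkp, hkq, Ne.symm hkp, Ne.symm hkq]),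
      sum_pair_support p q hne _ (fun k hkp hkq => by
        simp [embedR, hip, hne, hkp, hkq, Ne.symm hkp, Ne.symm hkq])]
    by_cases hjp : j = p
    · simp [embedR, hip, hjp, hne, Ne.symm hne]
      ring
    · by_cases hjq : j = q
      · simp [embedR, hip, hjp, hjq, hne, Ne.symm hne]
        linear_combination (-((starRingEnd ℂ) x * u)) * hxx
      · simp [embedR, hip, hjp, hjq, hne, Ne.symm hne, Ne.symm hjp, Ne.symm hjq]
  · by_cases hiq : i = q
    · rw [sum_pair_support p q hne _ (fun k hkp hkq => by
          simp [embedR, hiq, hne, hkp, hkq, Ne.symm hkp, Ne.symm hkq, Ne.symm hne]),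
        sum_pair_support p q hne _ (fun k hkp hkq => by
          simp [embedR, hiq, hne, hkp, hkq, Ne.symm hkp, Ne.symm hkq, Ne.symm hne])]
      by_cases hjp : j = p
      · simp [embedR, hiq, hjp, hne, Ne.symm hne]
        linear_combination (-(x * (starRingEnd ℂ) u)) * hxx
      · by_cases hjq : j = q
        · simp [embedR, hiq, hjp, hjq, hne, Ne.symm hne]
          ring
        · simp [embedR, hiq, hjp, hjq, hne, Ne.symm hne, Ne.symm hjp, Ne.symm hjq]
    · rw [Fintype.sum_eq_single i (fun k hk => by
          simp [embedR, hip, hiq, Ne.symm hk]),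
        Fintype.sum_eq_single i (fun k hk => by
          simp [embedR, hip, hiq, Ne.symm hk])]
      simp [embedR, hip, hiq]
end

section
/- Consider matrices R⁽ʲ⁾(rⱼ, wⱼ) for j = 1,…,s, where R⁽ʲ⁾ is the N×N embedding of R(rⱼ, wⱼ) at positions (j, s+1) in a nested configuration with a₁=0, aⱼ₊₁=aⱼ+1, so that the product R⁽¹⁾(r₁,w₁)⋯R⁽ˢ⁾(rₛ,wₛ) has first column entries: a₁₁ = r₁⋯rₛ, a_{j1} = -r_{j+1}⋯rₛ·w̄ⱼ for 1 ≤ j ≤ s-1, a_{s1} = -w̄ₛ, and a_{k1} = 0 for k > s. -/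
open Complex Matrix

theorem embedR_mul_apply {N : ℕ} (a b : ℂ) (p q : Fin N) (hpq : p ≠ q)
    (A : Matrix (Fin N) (Fin N) ℂ) (i j : Fin N) :
    (embedR N a b p q * A) i j =
      if i = p then a * A p j + b * A q j
      else if i = q then -(starRingEnd ℂ) b * A p j + (starRingEnd ℂ) a * A q j
      else A i j := by
  rw [Matrix.mul_apply]
  by_cases hip : i = p
  · simp only [if_pos hip]
    have h1 : ∀ k : Fin N, embedR N a b p q i k * A k j =
        (if k = p then a * A p j else 0) + (if k = q then b * A q j else 0) := by
      intro k
      simp only [embedR, hip]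
      by_cases h1 : k = p
      · subst h1; simp [hpq, Ne.symm hpq]
      · by_cases h2 : k = q
        · subst h2; simp [hpq, Ne.symm hpq, h1]
        · simp [h1, h2, Ne.symm h1]
    simp [h1, Finset.sum_add_distrib]
  · simp only [if_neg hip]
    by_cases hiq : i = q
    · rw [if_pos hiq]
      have h1 : ∀ k : Fin N, embedR N a b p q q k * A k j =
          (if k = p then -(starRingEnd ℂ) b * A p j else 0) +
            (if k = q then (starRingEnd ℂ) a * A q j else 0) := by
        intro k
        simp only [embedR]
        by_cases h1 : k = p
        · subst h1; simp [hpq, Ne.symm hpq]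
        · by_cases h2 : k = q
          · subst h2; simp [hpq, Ne.symm hpq, h1]
          · simp [h1, h2, Ne.symm h2, Ne.symm hpq]
      rw [hiq]
      simp [h1, Finset.sum_add_distrib]
    · have h1 : ∀ k : Fin N, embedR N a b p q i k * A k j =
          if k = i then A i j else 0 := by
        intro k
        by_cases h1 : k = i
        · subst h1; simp [embedR, hip, hiq]
        · have h2 : i ≠ k := fun h => h1 h.symm
          simp [embedR, hip, hiq, h1, h2]
      simp [h1, hiq]

def colFn (r : ℕ → ℝ) (w : ℕ → ℂ) (lo hi : ℕ) (i : ℕ) : ℂ :=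
  if i = 0 then ∏ k ∈ Finset.Icc (lo + 1) hi, ((r k : ℝ) : ℂ)
  else if lo + 1 ≤ i ∧ i ≤ hi then
    -((starRingEnd ℂ) (w i)) * ∏ k ∈ Finset.Icc (i + 1) hi, ((r k : ℝ) : ℂ)
  else 0

theorem key (N : ℕ) (hN0 : 0 < N) (r : ℕ → ℝ) (w : ℕ → ℂ) :
    ∀ (m t : ℕ) (htm : t + m < N), ∀ i : Fin N,
      ((List.ofFn (fun j : Fin m =>
        embedR N ((r (t + j.1 + 1) : ℝ) : ℂ) (w (t + j.1 + 1))
          ⟨0, hN0⟩ ⟨t + j.1 + 1, by have := j.isLt; omega⟩)).prod) i ⟨0, hN0⟩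
        = colFn r w t (t + m) i.1 := by
  intro m
  induction m with
  | zero =>
    intro t h i
    simp only [List.ofFn_zero, List.prod_nil, colFn, Nat.add_zero]
    by_cases h0 : i = (⟨0, hN0⟩ : Fin N)
    · subst h0
      simp [Matrix.one_apply, Finset.Icc_eq_empty_of_lt (by omega : t < t + 1)]
    · have hv : i.1 ≠ 0 := by
        intro hh; exact h0 (Fin.ext hh)
      have : ¬(t + 1 ≤ i.1 ∧ i.1 ≤ t) := by omega
      simp [Matrix.one_apply, h0, hv, this]
  | succ m ih =>
    intro t h i
    rw [List.ofFn_succ, List.prod_cons]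
    have e : ∀ jv : ℕ, t + (jv + 1) + 1 = t + 1 + jv + 1 := fun _ => by omega
    simp only [Fin.val_succ, Fin.val_zero, Nat.add_zero, e]
    have hpq : (⟨0, hN0⟩ : Fin N) ≠ ⟨t + 1, by omega⟩ := by
      simp [Fin.ext_iff]
    rw [embedR_mul_apply _ _ _ _ hpq]
    have ih0 := ih (t + 1) (by omega) ⟨0, hN0⟩
    have iht := ih (t + 1) (by omega) ⟨t + 1, by omega⟩
    have ihi := ih (t + 1) (by omega) i
    by_cases hi0 : i = (⟨0, hN0⟩ : Fin N)
    · rw [if_pos hi0, ih0, iht]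
      subst hi0
      simp only [colFn, if_pos rfl]
      have h2 : ¬(t + 1 + 1 ≤ t + 1 ∧ t + 1 ≤ t + 1 + m) := by omega
      rw [if_neg (by omega : ¬ t + 1 = 0), if_neg h2]
      have hins : Finset.Icc (t + 1) (t + (m + 1)) =
          insert (t + 1) (Finset.Icc (t + 1 + 1) (t + 1 + m)) := by
        ext k; simp [Finset.mem_Icc, Finset.mem_insert]; omega
      rw [hins, Finset.prod_insert (by simp)]
      simp
    · rw [if_neg hi0]
      by_cases hit : i = (⟨t + 1, by omega⟩ : Fin N)
      · rw [if_pos hit, ih0, iht]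
        subst hit
        simp only [colFn, if_pos rfl]
        have h2 : ¬(t + 1 + 1 ≤ t + 1 ∧ t + 1 ≤ t + 1 + m) := by omega
        rw [if_neg (by omega : ¬ t + 1 = 0), if_neg h2,
          if_neg (by omega : ¬ t + 1 = 0),
          if_pos (by omega : t + 1 ≤ t + 1 ∧ t + 1 ≤ t + (m + 1)),
          Complex.conj_ofReal]
        have : t + 1 + m = t + (m + 1) := by omega
        rw [this]
        simp
      · rw [if_neg hit, ihi]
        have hv0 : i.1 ≠ 0 := fun hh => hi0 (Fin.ext hh)
        have hvt : i.1 ≠ t + 1 := fun hh => hit (Fin.ext hh)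
        have htop : t + 1 + m = t + (m + 1) := by omega
        simp only [colFn, if_neg hv0, htop]
        by_cases hr : t + 1 + 1 ≤ i.1 ∧ i.1 ≤ t + (m + 1)
        · rw [if_pos hr, if_pos (by omega : t + 1 ≤ i.1 ∧ i.1 ≤ t + (m + 1))]
        · rw [if_neg hr, if_neg (by omega : ¬(t + 1 ≤ i.1 ∧ i.1 ≤ t + (m + 1)))]

/-- Equation (**) of Lemma 2: in the chained configuration where `R⁽ʲ⁾` embeds `R(rⱼ,wⱼ)`
in the rows/columns shared in a chain (blocks at positions `(0, j)` for `j = 1,…,s`),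
the first column of the product `R⁽¹⁾(r₁,w₁)⋯R⁽ˢ⁾(rₛ,wₛ)` is
`(r₁⋯rₛ, -r₂⋯rₛ·w̄₁, …, -rₛ·w̄_{s-1}, -w̄ₛ, 0, …, 0)`. -/
theorem stmt7 (N s : ℕ) (hs : 1 ≤ s) (hN : s < N) (r : ℕ → ℝ) (w : ℕ → ℂ)
    (hsu : ∀ j, 1 ≤ j → j ≤ s → (r j) ^ 2 + Complex.normSq (w j) = 1)
    (P : Matrix (Fin N) (Fin N) ℂ)
    (hP : P = (List.ofFn (fun j : Fin s =>
      embedR N ((r (j.1 + 1) : ℝ) : ℂ) (w (j.1 + 1))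
        ⟨0, by omega⟩ ⟨j.1 + 1, by have := j.isLt; omega⟩)).prod) :
    P ⟨0, by omega⟩ ⟨0, by omega⟩ = ∏ j ∈ Finset.Icc 1 s, ((r j : ℝ) : ℂ) ∧
    (∀ j, 1 ≤ j → (hj : j ≤ s) → P ⟨j, by omega⟩ ⟨0, by omega⟩ =
      -((starRingEnd ℂ) (w j)) * ∏ k ∈ Finset.Icc (j + 1) s, ((r k : ℝ) : ℂ)) ∧
    (∀ k, (hk : k < N) → s < k → P ⟨k, hk⟩ ⟨0, by omega⟩ = 0) := by
  have hN0 : 0 < N := by omega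
  have hkey := key N hN0 r w s 0 (by omega)
  simp only [Nat.zero_add] at hkey
  subst hP
  refine ⟨?_, ?_, ?_⟩
  · rw [hkey ⟨0, by omega⟩]
    simp [colFn]
  · intro j h1 hj
    rw [hkey ⟨j, by omega⟩]
    simp only [colFn]
    rw [if_neg (by omega : ¬ j = 0), if_pos (by omega : 0 + 1 ≤ j ∧ j ≤ s)]
  · intro k hk hsk
    rw [hkey ⟨k, hk⟩]
    simp only [colFn]
    rw [if_neg (by omega : ¬ k = 0), if_neg (by omega : ¬(0 + 1 ≤ k ∧ k ≤ s))]
end
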